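/- If m, n ≥ 2 and at least one of m and n is even, then G(m,n) equals the full symmetric group on Fin m × Fin n, i.e., every permutation of the m·n positions can be realized by a sequence of unit row and column rotations. -/

import Mathlib

/-- Unit rightward rotation of row `i` of the `m × n` Torus Puzzle. -/
def rowRot (m n : ℕ) (i : Fin m) : Equiv.Perm (Fin m × Fin n) where
  toFun p := if p.1 = i then (i, finRotate n p.2) else p
  invFun p := if p.1 = i then (i, (finRotate n).symm p.2) else p
  left_inv := by rintro ⟨a, b⟩; by_cases h : a = i <;> simp [h, -finRotate_apply, -finRotate_symm_apply]
  right_inv := by rintro ⟨a, b⟩; by_cases h : a = i <;> simp [h, -finRotate_apply, -finRotate_symm_apply]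

/-- Unit downward rotation of column `j` of the `m × n` Torus Puzzle. -/
def colRot (m n : ℕ) (j : Fin n) : Equiv.Perm (Fin m × Fin n) where
  toFun p := if p.2 = j then (finRotate m p.1, j) else p
  invFun p := if p.2 = j then ((finRotate m).symm p.1, j) else p
  left_inv := by rintro ⟨a, b⟩; by_cases h : b = j <;> simp [h, -finRotate_apply, -finRotate_symm_apply]
  right_inv := by rintro ⟨a, b⟩; by_cases h : b = j <;> simp [h, -finRotate_apply, -finRotate_symm_apply]

/-- The set `S(m,n)` of the `m + n` unit rotations. -/
def unitRotations (m n : ℕ) : Set (Equiv.Perm (Fin m × Fin n)) :=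
  Set.range (rowRot m n) ∪ Set.range (colRot m n)

/-- The group `G(m,n)` generated by the unit rotations. -/
def torusGroup (m n : ℕ) : Subgroup (Equiv.Perm (Fin m × Fin n)) :=
  Subgroup.closure (unitRotations m n)

open Equiv Equiv.Perm Subgroup
open scoped Fin.NatCast Fin.IntCast Fin.CommRing

def colP {m n : ℕ} (j : Fin n) (π : Equiv.Perm (Fin m)) : Equiv.Perm (Fin m × Fin n) where
  toFun p := if p.2 = j then (π p.1, j) else p
  invFun p := if p.2 = j then (π.symm p.1, j) else p
  left_inv := by rintro ⟨x, y⟩; by_cases h : y = j <;> simp [h]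
  right_inv := by rintro ⟨x, y⟩; by_cases h : y = j <;> simp [h]

def rowP {m n : ℕ} (i : Fin m) (π : Equiv.Perm (Fin n)) : Equiv.Perm (Fin m × Fin n) where
  toFun p := if p.1 = i then (i, π p.2) else p
  invFun p := if p.1 = i then (i, π.symm p.2) else p
  left_inv := by rintro ⟨x, y⟩; by_cases h : x = i <;> simp [h]
  right_inv := by rintro ⟨x, y⟩; by_cases h : x = i <;> simp [h]

theorem colP_apply {m n : ℕ} (j : Fin n) (π : Equiv.Perm (Fin m)) (p : Fin m × Fin n) :
    colP j π p = if p.2 = j then (π p.1, j) else p := rfl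

theorem rowP_apply {m n : ℕ} (i : Fin m) (π : Equiv.Perm (Fin n)) (p : Fin m × Fin n) :
    rowP i π p = if p.1 = i then (i, π p.2) else p := rfl

theorem colP_mul {m n : ℕ} (j : Fin n) (π π' : Equiv.Perm (Fin m)) :
    colP j (π * π') = colP j π * colP j π' := by
  apply Equiv.ext
  rintro ⟨x, y⟩
  by_cases h : y = j <;> simp [colP_apply, Perm.mul_apply, h]

theorem colP_one {m n : ℕ} (j : Fin n) : colP (m := m) j 1 = 1 := by
  apply Equiv.ext
  rintro ⟨x, y⟩
  by_cases h : y = j <;> simp [colP_apply, h]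

theorem rowP_mul {m n : ℕ} (i : Fin m) (π π' : Equiv.Perm (Fin n)) :
    rowP i (π * π') = rowP i π * rowP i π' := by
  apply Equiv.ext
  rintro ⟨x, y⟩
  by_cases h : x = i <;> simp [rowP_apply, Perm.mul_apply, h]

theorem rowP_one {m n : ℕ} (i : Fin m) : rowP (n := n) i 1 = 1 := by
  apply Equiv.ext
  rintro ⟨x, y⟩
  by_cases h : x = i <;> simp [rowP_apply, h]

theorem rowP_pow {m n : ℕ} (i : Fin m) (π : Equiv.Perm (Fin n)) (k : ℕ) :
    rowP i (π ^ k) = rowP i π ^ k := by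
  induction k with
  | zero => simpa using rowP_one i
  | succ k ih => rw [pow_succ, pow_succ, rowP_mul, ih]

theorem colP_inv {m n : ℕ} (j : Fin n) (π : Equiv.Perm (Fin m)) :
    colP j π⁻¹ = (colP j π)⁻¹ := by
  rw [eq_inv_iff_mul_eq_one, ← colP_mul, inv_mul_cancel, colP_one]

theorem colP_swap {m n : ℕ} (j : Fin n) (x y : Fin m) :
    colP j (Equiv.swap x y) = Equiv.swap (x, j) (y, j) := by
  apply Equiv.ext
  rintro ⟨r, c⟩
  by_cases h : c = j
  · subst h
    rcases eq_or_ne r x with rfl | hx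
    · simp [colP_apply]
    · rcases eq_or_ne r y with rfl | hy
      · simp [colP_apply]
      · have h1 : (r, c) ≠ (x, c) := by simp [hx]
        have h2 : (r, c) ≠ (y, c) := by simp [hy]
        simp [colP_apply, Equiv.swap_apply_of_ne_of_ne hx hy,
          Equiv.swap_apply_of_ne_of_ne h1 h2]
  · have h1 : (r, c) ≠ (x, j) := by simp [h]
    have h2 : (r, c) ≠ (y, j) := by simp [h]
    simp [colP_apply, h, Equiv.swap_apply_of_ne_of_ne h1 h2]


theorem finRotate_pow_apply (c k : ℕ) (x : Fin (c+1)) :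
    ((finRotate (c+1)) ^ k) x = x + (k : Fin (c+1)) := by
  induction k with
  | zero => simp
  | succ k ih =>
      rw [pow_succ', Perm.mul_apply, ih, finRotate_succ_apply]
      push_cast
      ring

theorem finRotate_pow_self (c : ℕ) : (finRotate (c+1)) ^ (c+1) = 1 := by
  apply Equiv.ext
  intro x
  rw [finRotate_pow_apply]
  simp [Fin.natCast_self]

theorem conj_pow_eq {G : Type*} [Group G] (g s : G) (k : ℕ) :
    (g * s * g⁻¹) ^ k = g * s ^ k * g⁻¹ := by
  induction k with
  | zero => simp
  | succ k ih => rw [pow_succ, pow_succ, ih]; group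

/-- the permutation of `Fin (b+2)` fixing `q` and rotating the rest cyclically. -/
def sig {b : ℕ} (q : Fin (b+2)) : Equiv.Perm (Fin (b+2)) :=
  Equiv.swap q (q + 1) * finRotate (b+2)

theorem add_one_ne_self {b : ℕ} (q : Fin (b+2)) : q + 1 ≠ q := by
  intro hc
  exact one_ne_zero (add_left_cancel (a := q) (by rw [add_zero, hc]))

theorem sig_apply {b : ℕ} (q x : Fin (b+2)) :
    sig q x = if x = q then q else if x + 1 = q then q + 1 else x + 1 := by
  rw [sig, Perm.mul_apply, finRotate_succ_apply]
  by_cases h1 : x = q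
  · simp [h1]
  · by_cases h2 : x + 1 = q
    · simp [h1, h2]
    · have h3 : x + 1 ≠ q + 1 := fun hc => h1 (add_right_cancel hc)
      simp [h1, h2, Equiv.swap_apply_of_ne_of_ne h2 h3]

/-- embedding of `Fin (b+1)` as nonzero elements of `Fin (b+2)` -/
def eSub (b : ℕ) : Fin (b+1) ≃ {x : Fin (b+2) // x ≠ (0 : Fin (b+2))} where
  toFun k := ⟨k.succ, Fin.succ_ne_zero k⟩
  invFun x := (x.1).pred x.2
  left_inv k := by simp
  right_inv x := by cases x; simp

theorem sig_zero_eq (b : ℕ) :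
    sig (0 : Fin (b+2)) = (finRotate (b+1)).extendDomain (eSub b) := by
  apply Equiv.ext
  intro x
  by_cases hx : x = (0 : Fin (b+2))
  · rw [hx, Equiv.Perm.extendDomain_apply_not_subtype, sig_apply] <;> simp
  · have key := Equiv.Perm.extendDomain_apply_subtype (finRotate (b+1)) (eSub b) hx
    rw [key, sig_apply, if_neg hx]
    have hsymm : ((finRotate (b+1)) ((eSub b).symm ⟨x, hx⟩)) = x.pred hx + 1 := by
      show ((finRotate (b+1)) (x.pred hx)) = _
      rw [finRotate_succ_apply]
    rw [hsymm]
    have hval : ((eSub b) (x.pred hx + 1) : Fin (b+2)) = (x.pred hx + 1).succ := rfl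
    rw [hval]
    have hxv : x.val < b + 2 := x.isLt
    have hx0 : x.val ≠ 0 := fun hc => hx (Fin.ext hc)
    have hL : ((x.pred hx + 1).succ : Fin (b+2)).val = x.val % (b+1) + 1 := by
      rw [Fin.val_succ, Fin.val_add, Fin.coe_pred, Fin.val_one']
      congr 1
      rw [Nat.add_mod, Nat.mod_mod_of_dvd _ (dvd_refl (b+1)), ← Nat.add_mod]
      congr 1
      omega
    by_cases h2 : x + 1 = 0
    · have h2v : (x.val + 1) % (b+2) = 0 := by
        have := congrArg Fin.val h2
        simpa [Fin.val_add] using this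
      have hve : x.val = b + 1 := by
        rcases Nat.lt_or_ge (x.val + 1) (b+2) with h | h
        · rw [Nat.mod_eq_of_lt h] at h2v; omega
        · omega
      rw [if_pos h2]
      apply Fin.ext
      rw [hL, hve, Nat.mod_self]
      simp
    · have hvb : x.val ≤ b := by
        rcases Nat.lt_or_ge (x.val + 1) (b+2) with h | h
        · by_contra hc
          exact h2 (Fin.ext (by rw [Fin.val_add, Fin.val_one, Nat.mod_eq_of_lt h]; omega))
        · by_contra hc
          exact h2 (Fin.ext (by
            rw [Fin.val_add, Fin.val_one]
            have : x.val = b + 1 := by omega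
            rw [this]
            simp))
      rw [if_neg h2]
      apply Fin.ext
      rw [hL, Fin.val_add, Fin.val_one, Nat.mod_eq_of_lt (by omega : x.val < b + 1),
        Nat.mod_eq_of_lt (by omega : x.val + 1 < b + 2)]

theorem sig_conj (b : ℕ) (q : Fin (b+2)) :
    sig q = (Equiv.addRight q) * sig 0 * (Equiv.addRight q)⁻¹ := by
  apply Equiv.ext
  intro x
  have hinv : ((Equiv.addRight q)⁻¹ : Equiv.Perm (Fin (b+2))) x = x + (-q) := by
    rw [Equiv.Perm.inv_def, Equiv.addRight_symm, Equiv.coe_addRight]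
  rw [Perm.mul_apply, Perm.mul_apply, hinv, sig_apply, sig_apply]
  have hAR : ∀ y : Fin (b+2), Equiv.addRight q y = y + q := fun _ => rfl
  by_cases h1 : x = q
  · simp [h1]
  · have h1' : x + (-q) ≠ 0 := fun hc => h1 (by
      have : x = x + (-q) + q := by ring
      rw [this, hc, zero_add])
    rw [if_neg h1, if_neg h1']
    by_cases h2 : x + 1 = q
    · have h2' : x + (-q) + 1 = 0 := by
        rw [show (0 : Fin (b+2)) = q + (-q) by ring, ← h2]; ring
      rw [if_pos h2, if_pos h2', hAR]
      ring
    · have h2' : x + (-q) + 1 ≠ 0 := by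
        intro hc
        apply h2
        have : x + 1 = (x + (-q) + 1) + q := by ring
        rw [this, hc, zero_add]
      rw [if_neg h2, if_neg h2', hAR]
      ring

theorem sig_pow {b : ℕ} (q : Fin (b+2)) : sig q ^ (b+1) = 1 := by
  rw [sig_conj, conj_pow_eq, sig_zero_eq, ← Equiv.Perm.extendDomain_pow, finRotate_pow_self,
    Equiv.Perm.extendDomain_one]
  group
theorem rowP_apply_self {m n : ℕ} (i : Fin m) (π : Equiv.Perm (Fin n)) (y : Fin n) :
    rowP i π (i, y) = (i, π y) := by simp [rowP_apply]

theorem rowP_apply_ne {m n : ℕ} {x i : Fin m} (h : x ≠ i) (π : Equiv.Perm (Fin n)) (y : Fin n) :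
    rowP i π (x, y) = (x, y) := by simp [rowP_apply, h]

-- apply lemmas
theorem rowRot_apply {a b : ℕ} (i x : Fin (a+2)) (y : Fin (b+2)) :
    rowRot (a+2) (b+2) i (x, y) = if x = i then (i, y + 1) else (x, y) := by
  show (if x = i then (i, finRotate (b+2) y) else (x,y)) = _
  rw [finRotate_succ_apply]

theorem rowRot_inv_apply {a b : ℕ} (i x : Fin (a+2)) (y : Fin (b+2)) :
    (rowRot (a+2) (b+2) i)⁻¹ (x, y) = if x = i then (i, y - 1) else (x, y) := by
  show (if x = i then (i, (finRotate (b+2)).symm y) else (x,y)) = _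
  have : (finRotate (b+2)).symm y = y - 1 := by
    rw [Equiv.symm_apply_eq, finRotate_succ_apply, sub_add_cancel]
  rw [this]

theorem colRot_apply {a b : ℕ} (j : Fin (b+2)) (x : Fin (a+2)) (y : Fin (b+2)) :
    colRot (a+2) (b+2) j (x, y) = if y = j then (x + 1, j) else (x, y) := by
  show (if y = j then (finRotate (a+2) x, j) else (x,y)) = _
  rw [finRotate_succ_apply]

theorem colRot_inv_apply {a b : ℕ} (j : Fin (b+2)) (x : Fin (a+2)) (y : Fin (b+2)) :
    (colRot (a+2) (b+2) j)⁻¹ (x, y) = if y = j then (x - 1, j) else (x, y) := by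
  show (if y = j then ((finRotate (a+2)).symm x, j) else (x,y)) = _
  have : (finRotate (a+2)).symm x = x - 1 := by
    rw [Equiv.symm_apply_eq, finRotate_succ_apply, sub_add_cancel]
  rw [this]

theorem key_eq (a b : ℕ) (j : Fin (b+2)) :
    rowRot (a+2) (b+2) 0 * colRot (a+2) (b+2) j * (rowRot (a+2) (b+2) 0)⁻¹ *
      (colRot (a+2) (b+2) j)⁻¹ * rowRot (a+2) (b+2) 0
    = Equiv.swap ((0 : Fin (a+2)), j) (1, j) * rowP 0 (sig j) := by
  have h10 : (1 : Fin (a+2)) ≠ 0 := by simp [Fin.ext_iff]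
  have hm1 : (0 : Fin (a+2)) - 1 ≠ 0 := by
    intro hc
    exact h10 (sub_eq_zero.mp hc).symm
  apply Equiv.ext
  rintro ⟨x, y⟩
  simp only [Perm.mul_apply]
  by_cases hx0 : x = 0
  · subst hx0
    rw [rowRot_apply 0 0 y, if_pos rfl, rowP_apply_self, sig_apply]
    by_cases hyj : y + 1 = j
    · have hyne : y ≠ j := fun hc => (add_one_ne_self j) (hc ▸ hyj)
      rw [colRot_inv_apply j 0 (y+1), if_pos hyj, rowRot_inv_apply 0 (0-1) j, if_neg hm1,
        colRot_apply j (0-1) j, if_pos rfl, sub_add_cancel, rowRot_apply 0 0 j, if_pos rfl,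
        if_neg hyne, if_pos hyj]
      rw [Equiv.swap_apply_of_ne_of_ne (by simp [add_one_ne_self j]) (by simp [h10])]
    · rw [colRot_inv_apply j 0 (y+1), if_neg hyj, rowRot_inv_apply 0 0 (y+1), if_pos rfl,
        add_sub_cancel_right]
      by_cases hyj2 : y = j
      · subst hyj2
        rw [colRot_apply y 0 y, if_pos rfl, zero_add, rowRot_apply 0 1 y, if_neg h10,
          if_pos rfl, Equiv.swap_apply_left]
      · rw [colRot_apply j 0 y, if_neg hyj2, rowRot_apply 0 0 y, if_pos rfl, if_neg hyj2,
          if_neg hyj, Equiv.swap_apply_of_ne_of_ne (by simp [hyj]) (by simp [h10])]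
  · rw [rowRot_apply 0 x y, if_neg hx0, rowP_apply_ne hx0]
    by_cases hyj : y = j
    · subst hyj
      by_cases hx1 : x = 1
      · subst hx1
        rw [colRot_inv_apply y 1 y, if_pos rfl, sub_self, rowRot_inv_apply 0 0 y, if_pos rfl]
        have hj1 : y - 1 ≠ y := fun hc => add_one_ne_self y (sub_eq_iff_eq_add.mp hc).symm
        rw [colRot_apply y 0 (y-1), if_neg hj1, rowRot_apply 0 0 (y-1), if_pos rfl,
          sub_add_cancel, Equiv.swap_apply_right]
      · rw [colRot_inv_apply y x y, if_pos rfl]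
        have hx1' : x - 1 ≠ 0 := by
          intro hc
          exact hx1 (by rw [← sub_add_cancel x 1, hc, zero_add])
        rw [rowRot_inv_apply 0 (x-1) y, if_neg hx1', colRot_apply y (x-1) y, if_pos rfl,
          sub_add_cancel, rowRot_apply 0 x y, if_neg hx0,
          Equiv.swap_apply_of_ne_of_ne (by simp [hx0]) (by simp [hx1])]
    · rw [colRot_inv_apply j x y, if_neg hyj, rowRot_inv_apply 0 x y, if_neg hx0,
        colRot_apply j x y, if_neg hyj, rowRot_apply 0 x y, if_neg hx0,
        Equiv.swap_apply_of_ne_of_ne (by simp [hx0]) (by simp [hyj])]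

-- membership of generators
theorem rowRot_mem (m n : ℕ) (i : Fin m) : rowRot m n i ∈ torusGroup m n :=
  subset_closure (Or.inl ⟨i, rfl⟩)

theorem colRot_mem (m n : ℕ) (j : Fin n) : colRot m n j ∈ torusGroup m n :=
  subset_closure (Or.inr ⟨j, rfl⟩)

theorem swap_col_mem (a b : ℕ) (hE : Even b) (j : Fin (b+2)) :
    Equiv.swap ((0 : Fin (a+2)), j) ((1 : Fin (a+2)), j) ∈ torusGroup (a+2) (b+2) := by
  set H := torusGroup (a+2) (b+2)
  set ρ := rowRot (a+2) (b+2) 0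
  set γ := colRot (a+2) (b+2) j
  set s := Equiv.swap ((0 : Fin (a+2)), j) ((1 : Fin (a+2)), j)
  set c := rowP (0 : Fin (a+2)) (sig j)
  have hu : ρ * γ * ρ⁻¹ * γ⁻¹ * ρ ∈ H :=
    mul_mem (mul_mem (mul_mem (mul_mem (rowRot_mem _ _ _) (colRot_mem _ _ _))
      (inv_mem (rowRot_mem _ _ _))) (inv_mem (colRot_mem _ _ _))) (rowRot_mem _ _ _)
  have hkey : ρ * γ * ρ⁻¹ * γ⁻¹ * ρ = s * c := key_eq a b j
  have hdisj : Equiv.Perm.Disjoint s c := by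
    rintro ⟨x, y⟩
    by_cases hx0 : x = 0
    · subst hx0
      by_cases hyj : y = j
      · subst hyj
        right
        rw [rowP_apply_self, sig_apply, if_pos rfl]
      · left
        exact Equiv.swap_apply_of_ne_of_ne (by simp [hyj]) (by simp [hyj])
    · right
      exact rowP_apply_ne hx0 _ _
  have hcomm : Commute s c := hdisj.commute
  obtain ⟨k, hk⟩ := hE
  have hpow : (s * c) ^ (b+1) = s := by
    rw [hcomm.mul_pow]
    have hc : c ^ (b+1) = 1 := by
      rw [← rowP_pow, sig_pow, rowP_one]
    have hs : s ^ (b+1) = s := by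
      have : b + 1 = 2 * k + 1 := by omega
      rw [this, pow_succ, pow_mul]
      have : s ^ 2 = 1 := by
        rw [pow_two]
        exact Equiv.swap_mul_self _ _
      rw [this, one_pow, one_mul]
    rw [hc, hs, mul_one]
  have : s ∈ H := by
    rw [← hpow, ← hkey]
    exact pow_mem hu (b+1)
  exact this

theorem colP_mem (a b : ℕ) (hE : Even b) (j : Fin (b+2)) (π : Equiv.Perm (Fin (a+2))) :
    colP j π ∈ torusGroup (a+2) (b+2) := by
  have htop : closure ({finRotate (a+2), Equiv.swap 0 (finRotate (a+2) 0)} :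
      Set (Equiv.Perm (Fin (a+2)))) = ⊤ :=
    closure_cycle_adjacent_swap isCycle_finRotate support_finRotate 0
  have hπ : π ∈ closure ({finRotate (a+2), Equiv.swap 0 (finRotate (a+2) 0)} :
      Set (Equiv.Perm (Fin (a+2)))) := htop.symm ▸ mem_top π
  induction hπ using closure_induction with
  | mem g hg =>
      rcases hg with hg | hg
      · rw [hg]
        exact colRot_mem (a+2) (b+2) j
      · rw [Set.mem_singleton_iff] at hg
        rw [hg]
        have h1 : finRotate (a+2) (0 : Fin (a+2)) = 1 := by
          rw [finRotate_succ_apply, zero_add]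
        rw [h1, colP_swap]
        exact swap_col_mem a b hE j
  | one => rw [colP_one]; exact one_mem _
  | mul x y hx hy ihx ihy => rw [colP_mul]; exact mul_mem ihx ihy
  | inv x hx ihx => rw [colP_inv]; exact inv_mem ihx

theorem rowRot_pow_apply {a b : ℕ} (i x : Fin (a+2)) (y : Fin (b+2)) (k : ℕ) :
    ((rowRot (a+2) (b+2) i) ^ k) (x, y) = if x = i then (i, y + (k : Fin (b+2))) else (x, y) := by
  induction k with
  | zero => by_cases h : x = i <;> simp [h]
  | succ k ih =>
      rw [pow_succ', Perm.mul_apply, ih]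
      by_cases h : x = i
      · rw [if_pos h, if_pos h, rowRot_apply i i (y + (k : Fin (b+2))), if_pos rfl]
        have hcast : y + (k : Fin (b+2)) + 1 = y + ((k+1 : ℕ) : Fin (b+2)) := by
          push_cast
          ring
        rw [hcast]
      · rw [if_neg h, if_neg h, rowRot_apply i x y, if_neg h]

theorem swap_mem (a b : ℕ) (hE : Even b) (p q : Fin (a+2) × Fin (b+2)) (hpq : p ≠ q) :
    Equiv.swap p q ∈ torusGroup (a+2) (b+2) := by
  obtain ⟨x, y⟩ := p
  obtain ⟨x', y'⟩ := q
  by_cases hy : y = y'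
  · subst hy
    have hxx : x ≠ x' := fun hc => hpq (by rw [hc])
    rw [← colP_swap]
    exact colP_mem a b hE y _
  · -- step 1 : swap (0,y) (1,y') ∈ H
    have h10 : (1 : Fin (a+2)) ≠ 0 := by simp [Fin.ext_iff]
    have s1 : Equiv.swap ((0 : Fin (a+2)), y) (1, y) ∈ torusGroup (a+2) (b+2) :=
      swap_col_mem a b hE y
    set g1 := (rowRot (a+2) (b+2) 1) ^ (y' - y).val with hg1
    have hg1mem : g1 ∈ torusGroup (a+2) (b+2) := pow_mem (rowRot_mem _ _ _) _
    have e1 : g1 (0, y) = ((0 : Fin (a+2)), y) := by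
      rw [hg1, rowRot_pow_apply, if_neg h10.symm]
    have e2 : g1 (1, y) = ((1 : Fin (a+2)), y') := by
      have hyy : y + (y' - y) = y' := by ring
      rw [hg1, rowRot_pow_apply, if_pos rfl, Fin.cast_val_eq_self, hyy]
    have s2 : Equiv.swap ((0 : Fin (a+2)), y) (1, y') ∈ torusGroup (a+2) (b+2) := by
      have := Equiv.swap_apply_apply g1 ((0 : Fin (a+2)), y) (1, y)
      rw [e1, e2] at this
      rw [this]
      exact mul_mem (mul_mem hg1mem s1) (inv_mem hg1mem)
    set g2 := colP y' (Equiv.swap (1 : Fin (a+2)) x') with hg2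
    have hg2mem : g2 ∈ torusGroup (a+2) (b+2) := colP_mem a b hE y' _
    have e3 : g2 (0, y) = ((0 : Fin (a+2)), y) := by
      rw [hg2, colP_apply, if_neg hy]
    have e4 : g2 (1, y') = (x', y') := by
      rw [hg2, colP_apply, if_pos rfl, Equiv.swap_apply_left]
    have s3 : Equiv.swap ((0 : Fin (a+2)), y) (x', y') ∈ torusGroup (a+2) (b+2) := by
      have := Equiv.swap_apply_apply g2 ((0 : Fin (a+2)), y) (1, y')
      rw [e3, e4] at this
      rw [this]
      exact mul_mem (mul_mem hg2mem s2) (inv_mem hg2mem)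
    set g3 := colP y (Equiv.swap (0 : Fin (a+2)) x) with hg3
    have hg3mem : g3 ∈ torusGroup (a+2) (b+2) := colP_mem a b hE y _
    have e5 : g3 (0, y) = (x, y) := by
      rw [hg3, colP_apply, if_pos rfl, Equiv.swap_apply_left]
    have e6 : g3 (x', y') = (x', y') := by
      rw [hg3, colP_apply, if_neg (fun hc => hy hc.symm)]
    have := Equiv.swap_apply_apply g3 ((0 : Fin (a+2)), y) (x', y')
    rw [e5, e6] at this
    rw [this]
    exact mul_mem (mul_mem hg3mem s3) (inv_mem hg3mem)

theorem main_even (m n : ℕ) (hm : 2 ≤ m) (hn : 2 ≤ n) (hE : Even n) :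
    torusGroup m n = ⊤ := by
  obtain ⟨a, rfl⟩ : ∃ a, m = a + 2 := ⟨m - 2, by omega⟩
  obtain ⟨b, rfl⟩ : ∃ b, n = b + 2 := ⟨n - 2, by omega⟩
  have hEb : Even b := by
    rcases hE with ⟨t, ht⟩
    exact ⟨t - 1, by omega⟩
  rw [eq_top_iff, ← Equiv.Perm.closure_isSwap, closure_le]
  rintro σ ⟨p, q, hpq, rfl⟩
  exact swap_mem a b hEb p q hpq

/-- transpose symmetry -/
def transMulEquiv (m n : ℕ) :
    Equiv.Perm (Fin m × Fin n) ≃* Equiv.Perm (Fin n × Fin m) :=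
  { Equiv.permCongr (Equiv.prodComm (Fin m) (Fin n)) with
    map_mul' := by
      intro p q
      apply Equiv.ext
      intro x
      simp [Equiv.permCongr_apply] }

theorem trans_rowRot (m n : ℕ) (i : Fin m) :
    transMulEquiv m n (rowRot m n i) = colRot n m i := by
  apply Equiv.ext
  rintro ⟨c, r⟩
  show (Equiv.permCongr (Equiv.prodComm (Fin m) (Fin n)) (rowRot m n i)) (c, r) = _
  rw [Equiv.permCongr_apply]
  by_cases h : r = i
  · subst h
    show Equiv.prodComm (Fin m) (Fin n) (rowRot m n r (r, c)) = _
    have h1 : rowRot m n r (r, c) = (r, finRotate n c) := by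
      show (if r = r then (r, finRotate n c) else (r, c)) = _
      rw [if_pos rfl]
    have h2 : colRot n m r (c, r) = (finRotate n c, r) := by
      show (if r = r then (finRotate n c, r) else (c, r)) = _
      rw [if_pos rfl]
    rw [h1, h2]
    rfl
  · show Equiv.prodComm (Fin m) (Fin n) (rowRot m n i (r, c)) = _
    have h1 : rowRot m n i (r, c) = (r, c) := by
      show (if r = i then (i, finRotate n c) else (r, c)) = _
      rw [if_neg h]
    have h2 : colRot n m i (c, r) = (c, r) := by
      show (if r = i then (finRotate n c, i) else (c, r)) = _
      rw [if_neg h]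
    rw [h1, h2]
    rfl

theorem trans_colRot (m n : ℕ) (j : Fin n) :
    transMulEquiv m n (colRot m n j) = rowRot n m j := by
  apply Equiv.ext
  rintro ⟨c, r⟩
  show (Equiv.permCongr (Equiv.prodComm (Fin m) (Fin n)) (colRot m n j)) (c, r) = _
  rw [Equiv.permCongr_apply]
  by_cases h : c = j
  · subst h
    show Equiv.prodComm (Fin m) (Fin n) (colRot m n c (r, c)) = _
    have h1 : colRot m n c (r, c) = (finRotate m r, c) := by
      show (if c = c then (finRotate m r, c) else (r, c)) = _
      rw [if_pos rfl]
    have h2 : rowRot n m c (c, r) = (c, finRotate m r) := by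
      show (if c = c then (c, finRotate m r) else (c, r)) = _
      rw [if_pos rfl]
    rw [h1, h2]
    rfl
  · show Equiv.prodComm (Fin m) (Fin n) (colRot m n j (r, c)) = _
    have h1 : colRot m n j (r, c) = (r, c) := by
      show (if c = j then (finRotate m r, j) else (r, c)) = _
      rw [if_neg h]
    have h2 : rowRot n m j (c, r) = (c, r) := by
      show (if c = j then (j, finRotate m r) else (c, r)) = _
      rw [if_neg h]
    rw [h1, h2]
    rfl

theorem map_torusGroup (m n : ℕ) :
    (torusGroup m n).map (transMulEquiv m n).toMonoidHom = torusGroup n m := by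
  rw [torusGroup, torusGroup, MonoidHom.map_closure]
  congr 1
  rw [unitRotations, unitRotations, Set.image_union]
  have h1 : (transMulEquiv m n).toMonoidHom '' Set.range (rowRot m n)
      = Set.range (colRot n m) := by
    rw [← Set.range_comp]
    have : ((transMulEquiv m n).toMonoidHom : Perm (Fin m × Fin n) → Perm (Fin n × Fin m))
        ∘ rowRot m n = colRot n m := funext (trans_rowRot m n)
    rw [this]
  have h2 : (transMulEquiv m n).toMonoidHom '' Set.range (colRot m n)
      = Set.range (rowRot n m) := by
    rw [← Set.range_comp]
    have : ((transMulEquiv m n).toMonoidHom : Perm (Fin m × Fin n) → Perm (Fin n × Fin m))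
        ∘ colRot m n = rowRot n m := funext (trans_colRot m n)
    rw [this]
  rw [h1, h2, Set.union_comm]

/-- When at least one of ,  is even, `G(m,n)` is the full symmetric group. -/
theorem torusGroup_eq_top_of_even (m n : ℕ)
    (hm : 2 ≤ m) (hn : 2 ≤ n) (h : Even m ∨ Even n) :
    torusGroup m n = ⊤ := by
  rcases h with hE | hE
  · have h2 : torusGroup n m = ⊤ := main_even n m hn hm hE
    have h3 := map_torusGroup m n
    rw [h2] at h3
    have h4 := congrArg (Subgroup.comap (transMulEquiv m n).toMonoidHom) h3
    rw [Subgroup.comap_map_eq_self_of_injective (transMulEquiv m n).injective] at h4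
    rw [h4, Subgroup.comap_top]
  · exact main_even m n hm hn hE
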